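/- For every integer n > 1, \(\Phi(n) = \sum_{d \mid n} \mu(d)\, 2^{n/d}\), where \(\mu\) is the Möbius function. -/
import Mathlib

open Finset ArithmeticFunction

/-- `Phi n` is the number of nonempty subsets `A` of `{1, 2, ..., n}` such that the gcd `(A)`
of the elements of `A` is relatively prime to `n`. -/
def Phi (n : ℕ) : ℕ :=
  ((Finset.Icc 1 n).powerset.filter
    (fun A => A.Nonempty ∧ Nat.gcd (A.gcd _root_.id) n = 1)).card

lemma sum_moebius_divisors (m : ℕ) :
    ∑ d ∈ m.divisors, (moebius d : ℤ) = if m = 1 then 1 else 0 := by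
  have h := congrArg (fun f : ArithmeticFunction ℤ => f m) moebius_mul_coe_zeta
  simp only [coe_mul_zeta_apply, one_apply] at h
  exact h

lemma card_powerset_filter_nonempty (s : Finset ℕ) :
    (s.powerset.filter (fun A => A.Nonempty)).card = 2 ^ s.card - 1 := by
  classical
  have h := Finset.card_filter_add_card_filter_not
    (s := s.powerset) (p := fun A => A.Nonempty)
  have hneg : s.powerset.filter (fun A => ¬A.Nonempty) = {∅} := by
    ext A
    simp only [Finset.mem_filter, Finset.mem_powerset, Finset.not_nonempty_iff_eq_empty,
      Finset.mem_singleton]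
    constructor
    · rintro ⟨_, h⟩; exact h
    · rintro rfl; exact ⟨Finset.empty_subset _, rfl⟩
  rw [hneg, Finset.card_singleton, Finset.card_powerset] at h
  omega

theorem Phi_eq (n : ℕ) (hn : 1 < n) :
    (Phi n : ℤ) = ∑ d ∈ n.divisors, (moebius d) * 2 ^ (n / d) := by
  classical
  have hn0 : n ≠ 0 := by omega
  set S := (Finset.Icc 1 n).powerset.filter (fun A => A.Nonempty) with hS
  have h1 : (Phi n : ℤ) =
      ∑ A ∈ S, if Nat.gcd (A.gcd _root_.id) n = 1 then (1 : ℤ) else 0 := by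
    rw [Finset.sum_boole, hS, Finset.filter_filter, Phi]
  rw [h1]
  have h2 : ∀ A ∈ S, (if Nat.gcd (A.gcd _root_.id) n = 1 then (1 : ℤ) else 0) =
      ∑ d ∈ n.divisors, if d ∣ A.gcd _root_.id then (moebius d : ℤ) else 0 := by
    intro A hA
    rw [← Finset.sum_filter]
    have hfil : n.divisors.filter (fun d => d ∣ A.gcd _root_.id)
        = (Nat.gcd (A.gcd _root_.id) n).divisors := by
      ext d
      simp only [Nat.mem_divisors, Finset.mem_filter, Nat.dvd_gcd_iff]
      constructor
      · rintro ⟨⟨hdn, _⟩, hdg⟩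
        exact ⟨⟨hdg, hdn⟩, Nat.gcd_ne_zero_right hn0⟩
      · rintro ⟨⟨hdg, hdn⟩, _⟩
        exact ⟨⟨hdn, hn0⟩, hdg⟩
    rw [hfil, sum_moebius_divisors]
  rw [Finset.sum_congr rfl h2, Finset.sum_comm]
  have h3 : ∀ d ∈ n.divisors,
      (∑ A ∈ S, if d ∣ A.gcd _root_.id then (moebius d : ℤ) else 0)
        = (moebius d : ℤ) * (2 ^ (n / d) - 1) := by
    intro d hd
    rw [← Finset.sum_filter, Finset.sum_const]
    have key : S.filter (fun A => d ∣ A.gcd _root_.id)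
        = ((Finset.Icc 1 n).filter (fun a => d ∣ a)).powerset.filter
            (fun A => A.Nonempty) := by
      rw [hS, Finset.filter_filter]
      ext A
      simp only [Finset.mem_filter, Finset.mem_powerset]
      constructor
      · rintro ⟨hsub, hne, hdvd⟩
        refine ⟨fun a ha => Finset.mem_filter.2 ⟨hsub ha, ?_⟩, hne⟩
        exact hdvd.trans (Finset.gcd_dvd ha)
      · rintro ⟨hsub, hne⟩
        refine ⟨fun a ha => (Finset.mem_filter.1 (hsub ha)).1, hne, ?_⟩
        exact Finset.dvd_gcd fun a ha => (Finset.mem_filter.1 (hsub ha)).2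
    have hc : ((Finset.Icc 1 n).filter (fun a => d ∣ a)).card = n / d := by
      rw [show Finset.Icc 1 n = Finset.Ioc 0 n from rfl]
      exact Nat.Ioc_filter_dvd_card_eq_div n d
    rw [key, card_powerset_filter_nonempty, hc, nsmul_eq_mul]
    have h2pow : (1 : ℕ) ≤ 2 ^ (n / d) := Nat.one_le_two_pow
    push_cast [Nat.cast_sub h2pow]
    ring
  rw [Finset.sum_congr rfl h3]
  have h4 : ∑ d ∈ n.divisors, (moebius d : ℤ) = 0 := by
    rw [sum_moebius_divisors]
    simp [Nat.ne_of_gt hn]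
  calc ∑ d ∈ n.divisors, (moebius d : ℤ) * (2 ^ (n / d) - 1)
      = (∑ d ∈ n.divisors, (moebius d : ℤ) * 2 ^ (n / d))
        - ∑ d ∈ n.divisors, (moebius d : ℤ) := by
        rw [← Finset.sum_sub_distrib]; apply Finset.sum_congr rfl; intros; ring
    _ = ∑ d ∈ n.divisors, (moebius d : ℤ) * 2 ^ (n / d) := by rw [h4, sub_zero]
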